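/- Cauchy interlacing inequality: if M is a real symmetric (n+m)×(n+m) matrix and S is the leading n×n principal submatrix of M, with eigenvalues of M listed in increasing order λ_1 ≤ ... ≤ λ_{n+m} and eigenvalues of S listed in increasing order μ_1 ≤ ... ≤ μ_n, then μ_i ≤ λ_{i+m} for all i = 1,...,n. -/

import Mathlib

open Matrix Finset Submodule Module


lemma inner_eq_dot {N : ℕ} (u v : EuclideanSpace ℝ (Fin N)) :
    inner (𝕜 := ℝ) u v = dotProduct ((WithLp.equiv 2 _) u) ((WithLp.equiv 2 _) v) := by
  simp [PiLp.inner_apply, dotProduct, mul_comm]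

lemma inner_mulVec_eig {N : ℕ} {M : Matrix (Fin N) (Fin N) ℝ} (hM : M.IsHermitian)
    (j : Fin N) (x : EuclideanSpace ℝ (Fin N)) :
    inner (𝕜 := ℝ) (hM.eigenvectorBasis j) (WithLp.toLp 2 (M *ᵥ (WithLp.equiv 2 _) x : Fin N → ℝ) : EuclideanSpace ℝ (Fin N))
      = hM.eigenvalues j * inner (𝕜 := ℝ) (hM.eigenvectorBasis j) x := by
  have hsym : Mᵀ = M := by
    have := hM.eq; rwa [conjTranspose_eq_transpose_of_trivial] at this
  rw [inner_eq_dot, inner_eq_dot]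
  show dotProduct ((WithLp.equiv 2 (Fin N → ℝ)) (hM.eigenvectorBasis j)) (M *ᵥ (WithLp.equiv 2 (Fin N → ℝ)) x) = _
  rw [dotProduct_mulVec, ← mulVec_transpose, hsym, WithLp.equiv_apply, hM.mulVec_eigenvectorBasis]
  simp [dotProduct, mul_comm, mul_left_comm, Finset.mul_sum, mul_assoc]

lemma inner_basis_eq_zero {N : ℕ} {M : Matrix (Fin N) (Fin N) ℝ} (hM : M.IsHermitian)
    {A : Set (Fin N)} {x : EuclideanSpace ℝ (Fin N)}
    (hx : x ∈ Submodule.span ℝ (⇑hM.eigenvectorBasis '' A)) {j : Fin N} (hj : j ∉ A) :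
    inner (𝕜 := ℝ) (hM.eigenvectorBasis j) x = 0 := by
  induction hx using Submodule.span_induction with
  | mem y hy =>
    obtain ⟨k, hk, rfl⟩ := hy
    exact hM.eigenvectorBasis.orthonormal.2 (fun h => hj (h ▸ hk))
  | zero => simp
  | add y z _ _ hy hz => rw [inner_add_right, hy, hz, add_zero]
  | smul a y _ hy => rw [inner_smul_right, hy, mul_zero]

lemma quad_le {N : ℕ} {M : Matrix (Fin N) (Fin N) ℝ} (hM : M.IsHermitian) (c : ℝ)
    {A : Set (Fin N)} (hA : ∀ j ∈ A, hM.eigenvalues j ≤ c)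
    {x : EuclideanSpace ℝ (Fin N)} (hx : x ∈ Submodule.span ℝ (⇑hM.eigenvectorBasis '' A)) :
    inner (𝕜 := ℝ) x (WithLp.toLp 2 (M *ᵥ (WithLp.equiv 2 _) x : Fin N → ℝ) : EuclideanSpace ℝ (Fin N))
      ≤ c * ‖x‖ ^ 2 := by
  set b := hM.eigenvectorBasis with hb
  have key : inner (𝕜 := ℝ) x (WithLp.toLp 2 (M *ᵥ (WithLp.equiv 2 _) x : Fin N → ℝ) : EuclideanSpace ℝ (Fin N))
      = ∑ j, hM.eigenvalues j * (inner (𝕜 := ℝ) (b j) x)^2 := by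
    rw [← b.sum_inner_mul_inner x]
    refine Finset.sum_congr rfl fun j _ => ?_
    rw [inner_mulVec_eig hM j x, real_inner_comm x (b j)]; ring
  have hnorm : ‖x‖ ^ 2 = ∑ j, (inner (𝕜 := ℝ) (b j) x)^2 := by
    rw [← real_inner_self_eq_norm_sq, ← b.sum_inner_mul_inner x x]
    refine Finset.sum_congr rfl fun j _ => ?_
    rw [real_inner_comm x (b j)]; ring
  rw [key, hnorm, Finset.mul_sum]
  refine Finset.sum_le_sum fun j _ => ?_
  by_cases hj : j ∈ A
  · exact mul_le_mul_of_nonneg_right (hA j hj) (sq_nonneg _)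
  · rw [inner_basis_eq_zero hM hx hj]; simp

lemma quad_ge {N : ℕ} {M : Matrix (Fin N) (Fin N) ℝ} (hM : M.IsHermitian) (c : ℝ)
    {A : Set (Fin N)} (hA : ∀ j ∈ A, c ≤ hM.eigenvalues j)
    {x : EuclideanSpace ℝ (Fin N)} (hx : x ∈ Submodule.span ℝ (⇑hM.eigenvectorBasis '' A)) :
    c * ‖x‖ ^ 2 ≤
      inner (𝕜 := ℝ) x (WithLp.toLp 2 (M *ᵥ (WithLp.equiv 2 _) x : Fin N → ℝ) : EuclideanSpace ℝ (Fin N)) := by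
  set b := hM.eigenvectorBasis with hb
  have key : inner (𝕜 := ℝ) x (WithLp.toLp 2 (M *ᵥ (WithLp.equiv 2 _) x : Fin N → ℝ) : EuclideanSpace ℝ (Fin N))
      = ∑ j, hM.eigenvalues j * (inner (𝕜 := ℝ) (b j) x)^2 := by
    rw [← b.sum_inner_mul_inner x]
    refine Finset.sum_congr rfl fun j _ => ?_
    rw [inner_mulVec_eig hM j x, real_inner_comm x (b j)]; ring
  have hnorm : ‖x‖ ^ 2 = ∑ j, (inner (𝕜 := ℝ) (b j) x)^2 := by
    rw [← real_inner_self_eq_norm_sq, ← b.sum_inner_mul_inner x x]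
    refine Finset.sum_congr rfl fun j _ => ?_
    rw [real_inner_comm x (b j)]; ring
  rw [key, hnorm, Finset.mul_sum]
  refine Finset.sum_le_sum fun j _ => ?_
  by_cases hj : j ∈ A
  · exact mul_le_mul_of_nonneg_right (hA j hj) (sq_nonneg _)
  · rw [inner_basis_eq_zero hM hx hj]; simp

noncomputable def extLin (n m : ℕ) : EuclideanSpace ℝ (Fin n) →ₗ[ℝ] EuclideanSpace ℝ (Fin (n + m)) where
  toFun y := WithLp.toLp 2 (fun j => Fin.addCases (fun i => y i) (fun _ => 0) j : Fin (n + m) → ℝ)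
  map_add' y z := by
    ext j
    induction j using Fin.addCases with
    | left i => simp
    | right i => simp
  map_smul' a y := by
    ext j
    induction j using Fin.addCases with
    | left i => simp
    | right i => simp

lemma extLin_castAdd {n m : ℕ} (y : EuclideanSpace ℝ (Fin n)) (i : Fin n) :
    extLin n m y (Fin.castAdd m i) = y i := by simp [extLin]

lemma extLin_natAdd {n m : ℕ} (y : EuclideanSpace ℝ (Fin n)) (i : Fin m) :
    extLin n m y (Fin.natAdd n i) = 0 := by simp [extLin]

lemma extLin_injective {n m : ℕ} : Function.Injective (extLin n m) := by
  intro y z h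
  ext i
  have h2 := congrFun (congrArg WithLp.ofLp h) (Fin.castAdd m i)
  rwa [extLin_castAdd, extLin_castAdd] at h2

lemma extLin_inner {n m : ℕ} (y z : EuclideanSpace ℝ (Fin n)) :
    inner (𝕜 := ℝ) (extLin n m y) (extLin n m z) = inner (𝕜 := ℝ) y z := by
  simp only [PiLp.inner_apply, RCLike.inner_apply, conj_trivial]
  rw [Fin.sum_univ_add]
  simp [extLin_castAdd, extLin_natAdd]

lemma extLin_quad {n m : ℕ} (M : Matrix (Fin (n + m)) (Fin (n + m)) ℝ)
    (y : EuclideanSpace ℝ (Fin n)) :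
    inner (𝕜 := ℝ) (extLin n m y)
        (WithLp.toLp 2 (M *ᵥ (WithLp.equiv 2 _) (extLin n m y) : Fin (n + m) → ℝ) : EuclideanSpace ℝ (Fin (n + m)))
      = inner (𝕜 := ℝ) y
        (WithLp.toLp 2 ((M.submatrix (Fin.castAdd m) (Fin.castAdd m)) *ᵥ (WithLp.equiv 2 _) y : Fin n → ℝ) :
          EuclideanSpace ℝ (Fin n)) := by
  simp only [PiLp.inner_apply, RCLike.inner_apply, conj_trivial]
  rw [Fin.sum_univ_add]
  have hz : ∀ i : Fin m, extLin n m y (Fin.natAdd n i) = 0 := extLin_natAdd y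
  simp only [WithLp.equiv_apply, mulVec, dotProduct, Fin.sum_univ_add, extLin_castAdd,
    extLin_natAdd, submatrix_apply, mul_zero, Finset.sum_const_zero, add_zero, zero_mul,
    Finset.sum_const_zero]

lemma finrank_span_image_onb {N : ℕ} (b : OrthonormalBasis (Fin N) ℝ (EuclideanSpace ℝ (Fin N)))
    (A : Finset (Fin N)) :
    finrank ℝ (span ℝ (⇑b '' ↑A)) = A.card := by
  have li : LinearIndependent ℝ (fun j : ↥(↑A : Set (Fin N)) => b j) :=
    (b.orthonormal.linearIndependent).comp _ Subtype.val_injective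
  rw [show ⇑b '' ↑A = Set.range (fun j : ↥(↑A : Set (Fin N)) => b j) by
    rw [← Set.image_eq_range]]
  rw [finrank_span_eq_card li]
  simp


/-- Cauchy interlacing inequality.  If `M` is a real symmetric
`(n+m) × (n+m)` matrix and `S` is its leading `n × n` principal submatrix, with the
eigenvalues of `M` listed in increasing order as `lam` and those of `S` listed in
increasing order as `mu` (both with multiplicity), then `mu i ≤ lam (i + m)`. -/
theorem cauchy_interlacing {n m : ℕ}
    (M : Matrix (Fin (n + m)) (Fin (n + m)) ℝ) (hM : M.IsHermitian)
    (hS : (M.submatrix (Fin.castAdd m) (Fin.castAdd m)).IsHermitian)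
    (lam : Fin (n + m) → ℝ) (mu : Fin n → ℝ)
    (hlam_mono : Monotone lam) (hmu_mono : Monotone mu)
    (hlam : ∃ σ : Equiv.Perm (Fin (n + m)), lam = hM.eigenvalues ∘ σ)
    (hmu : ∃ τ : Equiv.Perm (Fin n), mu = hS.eigenvalues ∘ τ) :
    ∀ i : Fin n, mu i ≤ lam ⟨i.val + m, by omega⟩ := by
  intro i
  obtain ⟨σ, hσ⟩ := hlam
  obtain ⟨τ, hτ⟩ := hmu
  have him : i.val < n := i.isLt
  set c : ℝ := lam ⟨i.val + m, by omega⟩ with hc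
  set A : Finset (Fin (n + m)) := Finset.univ.filter (fun j => hM.eigenvalues j ≤ c) with hA
  set B : Finset (Fin n) := Finset.univ.filter (fun j => mu i ≤ hS.eigenvalues j) with hB
  -- cardinality bounds
  have hAcard : i.val + m + 1 ≤ A.card := by
    have hsub : (Finset.Iic (⟨i.val + m, by omega⟩ : Fin (n + m))).image σ ⊆ A := by
      intro j hj
      obtain ⟨k, hk, rfl⟩ := Finset.mem_image.mp hj
      have h1 : hM.eigenvalues (σ k) = lam k := (congrFun hσ k).symm
      have h2 : lam k ≤ c := hlam_mono (Finset.mem_Iic.mp hk)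
      simp only [hA, Finset.mem_filter, Finset.mem_univ, true_and]
      rw [h1]; exact h2
    calc i.val + m + 1 = (Finset.Iic (⟨i.val + m, by omega⟩ : Fin (n + m))).card := by
            rw [Fin.card_Iic]
      _ = ((Finset.Iic (⟨i.val + m, by omega⟩ : Fin (n + m))).image σ).card :=
            (Finset.card_image_of_injective _ σ.injective).symm
      _ ≤ A.card := Finset.card_le_card hsub
  have hBcard : n - i.val ≤ B.card := by
    have hsub : (Finset.Ici i).image τ ⊆ B := by
      intro j hj
      obtain ⟨k, hk, rfl⟩ := Finset.mem_image.mp hj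
      have h1 : hS.eigenvalues (τ k) = mu k := (congrFun hτ k).symm
      have h2 : mu i ≤ mu k := hmu_mono (Finset.mem_Ici.mp hk)
      simp only [hB, Finset.mem_filter, Finset.mem_univ, true_and]
      rw [h1]; exact h2
    calc n - i.val = (Finset.Ici i).card := (Fin.card_Ici i).symm
      _ = ((Finset.Ici i).image τ).card := (Finset.card_image_of_injective _ τ.injective).symm
      _ ≤ B.card := Finset.card_le_card hsub
  -- subspaces
  set W : Submodule ℝ (EuclideanSpace ℝ (Fin (n + m))) :=
    span ℝ (⇑hM.eigenvectorBasis '' ↑A) with hW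
  set V0 : Submodule ℝ (EuclideanSpace ℝ (Fin n)) :=
    span ℝ (⇑hS.eigenvectorBasis '' ↑B) with hV0
  set V : Submodule ℝ (EuclideanSpace ℝ (Fin (n + m))) := V0.map (extLin n m) with hV
  have hWrank : finrank ℝ W = A.card := finrank_span_image_onb _ A
  have hVrank : finrank ℝ V = B.card := by
    rw [hV, ← (Submodule.equivMapOfInjective _ extLin_injective V0).finrank_eq]
    exact finrank_span_image_onb _ B
  have hint : V ⊓ W ≠ ⊥ := by
    intro hbot
    have hsum := Submodule.finrank_sup_add_finrank_inf_eq V W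
    have hle : finrank ℝ ↥(V ⊔ W) ≤ n + m :=
      le_trans (Submodule.finrank_le _) (le_of_eq finrank_euclideanSpace_fin)
    rw [hbot, finrank_bot] at hsum
    omega
  obtain ⟨x, hxmem, hx0⟩ := Submodule.exists_mem_ne_zero_of_ne_bot hint
  obtain ⟨hxV, hxW⟩ := Submodule.mem_inf.mp hxmem
  obtain ⟨y, hyV0, rfl⟩ := hxV
  have hy0 : y ≠ 0 := fun h => hx0 (by rw [h, map_zero])
  have hny : (0:ℝ) < ‖y‖ ^ 2 := by
    have : ‖y‖ ≠ 0 := norm_ne_zero_iff.mpr hy0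
    positivity
  have hnorm_eq : ‖extLin n m y‖ ^ 2 = ‖y‖ ^ 2 := by
    rw [← real_inner_self_eq_norm_sq, ← real_inner_self_eq_norm_sq, extLin_inner]
  have h1 : inner (𝕜 := ℝ) (extLin n m y)
      (WithLp.toLp 2 (M *ᵥ (WithLp.equiv 2 _) (extLin n m y) : Fin (n + m) → ℝ) : EuclideanSpace ℝ (Fin (n + m)))
        ≤ c * ‖extLin n m y‖ ^ 2 := by
    refine quad_le hM c (fun j hj => ?_) hxW
    exact (Finset.mem_filter.mp hj).2
  have h2 : mu i * ‖y‖ ^ 2 ≤ inner (𝕜 := ℝ) y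
      (WithLp.toLp 2 ((M.submatrix (Fin.castAdd m) (Fin.castAdd m)) *ᵥ (WithLp.equiv 2 _) y : Fin n → ℝ) :
        EuclideanSpace ℝ (Fin n)) := by
    refine quad_ge hS (mu i) (fun j hj => ?_) hyV0
    exact (Finset.mem_filter.mp hj).2
  have h3 := extLin_quad M y
  rw [h3, hnorm_eq] at h1
  have : mu i * ‖y‖ ^ 2 ≤ c * ‖y‖ ^ 2 := le_trans h2 h1
  exact (mul_le_mul_iff_of_pos_right hny).mp this
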